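/- Let A be a unital associative k-algebra and λ, μ ∈ k. Define W(a ⊗ b) = ab ⊗ 1 + λ·1 ⊗ ab − b ⊗ a, Z(a ⊗ b) = μ·ab ⊗ 1 + 1 ⊗ ab − b ⊗ a, and X(a ⊗ b) = ab ⊗ 1 + 1 ⊗ ab − b ⊗ a. Then the Yang–Baxter commutators vanish: [W,W,W] = 0, [Z,Z,Z] = 0, [W,X,X] = 0, and [X,X,Z] = 0. -/

import Mathlib

open TensorProduct

noncomputable def r12 (k V : Type*) [Field k] [AddCommGroup V] [Module k V]
    (R : V ⊗[k] V →ₗ[k] V ⊗[k] V) :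
    (V ⊗[k] V) ⊗[k] V →ₗ[k] (V ⊗[k] V) ⊗[k] V :=
  TensorProduct.map R LinearMap.id

noncomputable def r23 (k V : Type*) [Field k] [AddCommGroup V] [Module k V]
    (R : V ⊗[k] V →ₗ[k] V ⊗[k] V) :
    (V ⊗[k] V) ⊗[k] V →ₗ[k] (V ⊗[k] V) ⊗[k] V :=
  (TensorProduct.assoc k V V V).symm.toLinearMap ∘ₗ
    TensorProduct.map LinearMap.id R ∘ₗ (TensorProduct.assoc k V V V).toLinearMap

noncomputable def tau (k V : Type*) [Field k] [AddCommGroup V] [Module k V] :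
    V ⊗[k] V →ₗ[k] V ⊗[k] V :=
  (TensorProduct.comm k V V).toLinearMap

noncomputable def r13 (k V : Type*) [Field k] [AddCommGroup V] [Module k V]
    (R : V ⊗[k] V →ₗ[k] V ⊗[k] V) :
    (V ⊗[k] V) ⊗[k] V →ₗ[k] (V ⊗[k] V) ⊗[k] V :=
  r23 k V (tau k V) ∘ₗ r12 k V R ∘ₗ r23 k V (tau k V)

/-- The braid equation. -/
def IsBraid (k V : Type*) [Field k] [AddCommGroup V] [Module k V]
    (R : V ⊗[k] V →ₗ[k] V ⊗[k] V) : Prop :=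
  r12 k V R ∘ₗ r23 k V R ∘ₗ r12 k V R = r23 k V R ∘ₗ r12 k V R ∘ₗ r23 k V R

/-- The (constant) quantum Yang–Baxter equation. -/
def IsQYBE (k V : Type*) [Field k] [AddCommGroup V] [Module k V]
    (R : V ⊗[k] V →ₗ[k] V ⊗[k] V) : Prop :=
  r12 k V R ∘ₗ r13 k V R ∘ₗ r23 k V R = r23 k V R ∘ₗ r13 k V R ∘ₗ r12 k V R

/-- The Yang–Baxter commutator [R,S,T] = R¹² S¹³ T²³ − T²³ S¹³ R¹². -/
noncomputable def ybComm (k V : Type*) [Field k] [AddCommGroup V] [Module k V]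
    (R S T : V ⊗[k] V →ₗ[k] V ⊗[k] V) :
    (V ⊗[k] V) ⊗[k] V →ₗ[k] (V ⊗[k] V) ⊗[k] V :=
  r12 k V R ∘ₗ r13 k V S ∘ₗ r23 k V T - r23 k V T ∘ₗ r13 k V S ∘ₗ r12 k V R

set_option maxHeartbeats 4000000 in
theorem wxz_system_of_algebra
    (k A : Type*) [Field k] [Ring A] [Algebra k A]
    (lam mu : k)
    (W Z X : A ⊗[k] A →ₗ[k] A ⊗[k] A)
    (hW : ∀ a b : A, W (a ⊗ₜ b) =
      (a * b) ⊗ₜ (1 : A) + lam • ((1 : A) ⊗ₜ (a * b)) - b ⊗ₜ a)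
    (hZ : ∀ a b : A, Z (a ⊗ₜ b) =
      mu • ((a * b) ⊗ₜ (1 : A)) + (1 : A) ⊗ₜ (a * b) - b ⊗ₜ a)
    (hX : ∀ a b : A, X (a ⊗ₜ b) =
      (a * b) ⊗ₜ (1 : A) + (1 : A) ⊗ₜ (a * b) - b ⊗ₜ a) :
    ybComm k A W W W = 0 ∧ ybComm k A Z Z Z = 0 ∧
      ybComm k A W X X = 0 ∧ ybComm k A X X Z = 0 := by
  refine ⟨?_, ?_, ?_, ?_⟩ <;>
  · apply TensorProduct.ext
    apply TensorProduct.ext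
    ext a b c
    simp only [ybComm, r12, r13, r23, tau, LinearMap.sub_apply, LinearMap.comp_apply,
      LinearMap.compr₂_apply, LinearMap.compr₂ₛₗ_apply, TensorProduct.mk_apply, LinearEquiv.coe_coe,
      TensorProduct.map_tmul, TensorProduct.assoc_tmul, TensorProduct.assoc_symm_tmul,
      TensorProduct.comm_tmul, LinearMap.id_apply, hW, hZ, hX,
      TensorProduct.tmul_add, TensorProduct.tmul_sub, TensorProduct.add_tmul,
      TensorProduct.sub_tmul, TensorProduct.tmul_smul, TensorProduct.smul_tmul',
      map_add, map_sub, map_smul, mul_one, one_mul, mul_assoc, LinearMap.zero_apply]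
    simp only [smul_mul_assoc, mul_smul_comm, smul_smul, one_mul, mul_one, mul_assoc,
      TensorProduct.tmul_smul, ← TensorProduct.smul_tmul', smul_tmul]
    module
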